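/- Let a, b, c : ℝⁿ → ℝ be continuous with c(x) > 0 and let Φ : [0,T] × ℝⁿ → ℝ be continuous. Let u ∈ C²([0,T] × ℝⁿ) be such that there is a compact set K ⊂ ℝⁿ with u(t,x) = 0 for all t ∈ [0,T] and x ∉ K, and suppose u satisfies ∂ₜ²u − c²Δu + a∂ₜu + bu + (Φ ⋆ ∂ₜu) = 0 pointwise on (0,T) × ℝⁿ. Define the energy E(t) = ∫_{ℝⁿ} ( |∇ₓu(t,x)|² + c(x)⁻² b(x) |u(t,x)|² + c(x)⁻² |∂ₜu(t,x)|² ) dx. Then E is differentiable on (0,T) and for every t ∈ (0,T), E′(t) = −2 ∫_{ℝⁿ} a(x) c(x)⁻² |∂ₜu(t,x)|² dx − 2 ∫_{ℝⁿ} c(x)⁻² (Φ ⋆ ∂ₜu)(t,x) ∂ₜu(t,x) dx. -/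

import Mathlib

open MeasureTheory Set

/-- Partial derivative in the `i`-th coordinate direction. -/
noncomputable def pd {n : ℕ} (i : Fin n) (f : EuclideanSpace ℝ (Fin n) → ℝ)
    (x : EuclideanSpace ℝ (Fin n)) : ℝ :=
  fderiv ℝ f x (EuclideanSpace.single i 1)

/-- Laplacian in the spatial variable. -/
noncomputable def lap {n : ℕ} (f : EuclideanSpace ℝ (Fin n) → ℝ)
    (x : EuclideanSpace ℝ (Fin n)) : ℝ :=
  ∑ i : Fin n, pd i (fun y => pd i f y) x

/-- First time derivative `∂ₜu`. -/
noncomputable def dt1 {n : ℕ} (u : ℝ → EuclideanSpace ℝ (Fin n) → ℝ) (t : ℝ)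
    (x : EuclideanSpace ℝ (Fin n)) : ℝ :=
  deriv (fun s => u s x) t

/-- Second time derivative `∂ₜ²u`. -/
noncomputable def dt2 {n : ℕ} (u : ℝ → EuclideanSpace ℝ (Fin n) → ℝ) (t : ℝ)
    (x : EuclideanSpace ℝ (Fin n)) : ℝ :=
  deriv (fun s => dt1 u s x) t

/-- Time convolution `(Φ ⋆ w)(t,x) = ∫₀ᵗ Φ(t−s,x) w(s,x) ds`. -/
noncomputable def tconv {n : ℕ} (Φ : ℝ → EuclideanSpace ℝ (Fin n) → ℝ)
    (w : ℝ → EuclideanSpace ℝ (Fin n) → ℝ) (t : ℝ) (x : EuclideanSpace ℝ (Fin n)) : ℝ :=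
  ∫ s in (0:ℝ)..t, Φ (t - s) x * w s x


noncomputable section EnergyAux

variable {n : ℕ}



def FFs (u : ℝ → (EuclideanSpace ℝ (Fin n)) → ℝ) : ℝ × (EuclideanSpace ℝ (Fin n)) → ℝ := fun p => u p.1 p.2

def AAs (u : ℝ → (EuclideanSpace ℝ (Fin n)) → ℝ) : ℝ × (EuclideanSpace ℝ (Fin n)) → (ℝ × (EuclideanSpace ℝ (Fin n)) →L[ℝ] ℝ) := fderiv ℝ (FFs u)

def DDs (u : ℝ → (EuclideanSpace ℝ (Fin n)) → ℝ) : ℝ × (EuclideanSpace ℝ (Fin n)) → (ℝ × (EuclideanSpace ℝ (Fin n)) →L[ℝ] (ℝ × (EuclideanSpace ℝ (Fin n)) →L[ℝ] ℝ)) := fderiv ℝ (AAs u)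

def GGs (T : ℝ) (u : ℝ → (EuclideanSpace ℝ (Fin n)) → ℝ) : ℝ × (EuclideanSpace ℝ (Fin n)) → (ℝ × (EuclideanSpace ℝ (Fin n)) →L[ℝ] ℝ) :=
  fderivWithin ℝ (FFs u) (Icc 0 T ×ˢ univ)

variable {T : ℝ} {u : ℝ → (EuclideanSpace ℝ (Fin n)) → ℝ}

lemma omega_open : IsOpen (Ioo (0:ℝ) T ×ˢ (univ : Set (EuclideanSpace ℝ (Fin n)))) := isOpen_Ioo.prod isOpen_univ

lemma omega_sub : (Ioo (0:ℝ) T ×ˢ (univ : Set (EuclideanSpace ℝ (Fin n)))) ⊆ Icc 0 T ×ˢ univ :=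
  prod_mono Ioo_subset_Icc_self (subset_refl _)

lemma omega_nhds {p : ℝ × (EuclideanSpace ℝ (Fin n))} (hp : p ∈ Ioo (0:ℝ) T ×ˢ (univ : Set (EuclideanSpace ℝ (Fin n)))) :
    (Ioo (0:ℝ) T ×ˢ (univ : Set (EuclideanSpace ℝ (Fin n)))) ∈ nhds p := omega_open.mem_nhds hp

variable (hu : ContDiffOn ℝ 2 (FFs u) (Icc 0 T ×ˢ univ))
include hu

lemma huΩ : ContDiffOn ℝ 2 (FFs u) (Ioo (0:ℝ) T ×ˢ (univ : Set (EuclideanSpace ℝ (Fin n)))) := hu.mono omega_sub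

lemma hasfd1 : ∀ p ∈ Ioo (0:ℝ) T ×ˢ (univ : Set (EuclideanSpace ℝ (Fin n))), HasFDerivAt (FFs u) (AAs u p) p := by
  intro p hp
  have := ((huΩ hu).differentiableOn (by norm_num) p hp).differentiableAt (omega_nhds hp)
  exact this.hasFDerivAt

lemma contA : ContinuousOn (AAs u) (Ioo (0:ℝ) T ×ˢ (univ : Set (EuclideanSpace ℝ (Fin n)))) := by
  have h := (huΩ hu).fderiv_of_isOpen omega_open (m := 1) (by norm_num)
  exact h.continuousOn

lemma hasfd2 : ∀ p ∈ Ioo (0:ℝ) T ×ˢ (univ : Set (EuclideanSpace ℝ (Fin n))), HasFDerivAt (AAs u) (DDs u p) p := by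
  intro p hp
  have h := (huΩ hu).fderiv_of_isOpen omega_open (m := 1) (by norm_num)
  have := (h.differentiableOn (by norm_num) p hp).differentiableAt (omega_nhds hp)
  exact this.hasFDerivAt

lemma contD : ContinuousOn (DDs u) (Ioo (0:ℝ) T ×ˢ (univ : Set (EuclideanSpace ℝ (Fin n)))) := by
  have h := (huΩ hu).fderiv_of_isOpen omega_open (m := 1) (by norm_num)
  have h2 := h.fderiv_of_isOpen omega_open (m := 0) (by norm_num)
  exact h2.continuousOn

lemma symmD : ∀ p ∈ Ioo (0:ℝ) T ×ˢ (univ : Set (EuclideanSpace ℝ (Fin n))), ∀ v w, DDs u p v w = DDs u p w v := by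
  intro p hp v w
  refine second_derivative_symmetric_of_eventually (f := FFs u) ?_ (hasfd2 hu p hp) v w
  filter_upwards [omega_nhds hp] with q hq using hasfd1 hu q hq

omit hu in
lemma hT' (hT : 0 < T) : UniqueDiffOn ℝ ((Icc (0:ℝ) T) ×ˢ (univ : Set (EuclideanSpace ℝ (Fin n)))) :=
  (uniqueDiffOn_Icc hT).prod uniqueDiffOn_univ

lemma contG (hT : 0 < T) : ContinuousOn (GGs T u) (Icc 0 T ×ˢ univ) :=
  hu.continuousOn_fderivWithin ((uniqueDiffOn_Icc hT).prod uniqueDiffOn_univ) (by norm_num)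

omit hu in
lemma GAeq : ∀ p ∈ Ioo (0:ℝ) T ×ˢ (univ : Set (EuclideanSpace ℝ (Fin n))), GGs T u p = AAs u p := by
  intro p hp
  exact fderivWithin_of_mem_nhds (Filter.mem_of_superset (omega_nhds hp) omega_sub)

end EnergyAux

section Identities
variable {n : ℕ} {T : ℝ} {u : ℝ → EuclideanSpace ℝ (Fin n) → ℝ}
variable (hu : ContDiffOn ℝ 2 (FFs u) (Icc 0 T ×ˢ univ))
include hu

lemma hasD_time {τ : ℝ} (hτ : τ ∈ Ioo 0 T) (x : EuclideanSpace ℝ (Fin n)) :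
    HasDerivAt (fun s => u s x) (AAs u (τ, x) (1, 0)) τ := by
  have hp : ((τ, x) : ℝ × EuclideanSpace ℝ (Fin n)) ∈ Ioo (0:ℝ) T ×ˢ univ := ⟨hτ, mem_univ x⟩
  have h1 : HasDerivAt (fun s : ℝ => ((s, x) : ℝ × EuclideanSpace ℝ (Fin n))) (1, 0) τ :=
    (hasDerivAt_id τ).prodMk (hasDerivAt_const τ x)
  exact (hasfd1 hu _ hp).comp_hasDerivAt τ h1

lemma dt1_eq {τ : ℝ} (hτ : τ ∈ Ioo 0 T) (x : EuclideanSpace ℝ (Fin n)) :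
    dt1 u τ x = AAs u (τ, x) (1, 0) := (hasD_time hu hτ x).deriv

lemma hasF_space {τ : ℝ} (hτ : τ ∈ Ioo 0 T) (x : EuclideanSpace ℝ (Fin n)) :
    HasFDerivAt (fun y => u τ y)
      ((AAs u (τ, x)).comp (ContinuousLinearMap.inr ℝ ℝ (EuclideanSpace ℝ (Fin n)))) x :=
  (hasfd1 hu _ ⟨hτ, mem_univ x⟩).comp x (hasFDerivAt_prodMk_right τ x)

lemma pd_eq {τ : ℝ} (hτ : τ ∈ Ioo 0 T) (i : Fin n) (x : EuclideanSpace ℝ (Fin n)) :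
    pd i (fun y => u τ y) x = AAs u (τ, x) (0, EuclideanSpace.single i 1) := by
  rw [pd, (hasF_space hu hτ x).fderiv]; rfl

lemma grad_sq_eq {τ : ℝ} (hτ : τ ∈ Ioo 0 T) (x : EuclideanSpace ℝ (Fin n)) :
    ‖gradient (fun y => u τ y) x‖^2
      = ∑ i, (AAs u (τ, x) (0, EuclideanSpace.single i 1))^2 := by
  have hcoord : ∀ i, gradient (fun y => u τ y) x i
      = AAs u (τ, x) (0, EuclideanSpace.single i 1) := by
    intro i
    have h1 : (inner ℝ (gradient (fun y => u τ y) x) (EuclideanSpace.single i (1:ℝ)) : ℝ)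
        = fderiv ℝ (fun y => u τ y) x (EuclideanSpace.single i 1) := by
      rw [gradient]; exact InnerProductSpace.toDual_symm_apply
    rw [EuclideanSpace.inner_single_right] at h1
    simp only [one_mul, starRingEnd_apply, star_trivial] at h1
    rw [h1, (hasF_space hu hτ x).fderiv]; rfl
  rw [EuclideanSpace.norm_eq, Real.sq_sqrt (by positivity)]
  exact Finset.sum_congr rfl fun i _ => by rw [← hcoord i]; simp [sq_abs]

end Identities

section Identities2
variable {n : ℕ} {T : ℝ} {u : ℝ → EuclideanSpace ℝ (Fin n) → ℝ}
variable (hu : ContDiffOn ℝ 2 (FFs u) (Icc 0 T ×ˢ univ))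
include hu

lemma hasD_time2 {τ : ℝ} (hτ : τ ∈ Ioo 0 T) (x : EuclideanSpace ℝ (Fin n))
    (v : ℝ × EuclideanSpace ℝ (Fin n)) :
    HasDerivAt (fun s => AAs u (s, x) v) (DDs u (τ, x) (1, 0) v) τ := by
  have h1 : HasDerivAt (fun s : ℝ => ((s, x) : ℝ × EuclideanSpace ℝ (Fin n))) (1, 0) τ :=
    (hasDerivAt_id τ).prodMk (hasDerivAt_const τ x)
  have h2 := (hasfd2 hu _ ⟨hτ, mem_univ x⟩).comp_hasDerivAt τ h1
  exact (ContinuousLinearMap.apply ℝ ℝ v).hasFDerivAt.comp_hasDerivAt τ h2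

lemma hasD_dt1_time {τ : ℝ} (hτ : τ ∈ Ioo 0 T) (x : EuclideanSpace ℝ (Fin n)) :
    HasDerivAt (fun s => dt1 u s x) (DDs u (τ, x) (1, 0) (1, 0)) τ := by
  refine (hasD_time2 hu hτ x (1, 0)).congr_of_eventuallyEq ?_
  filter_upwards [Ioo_mem_nhds hτ.1 hτ.2] with s hs
  exact dt1_eq hu hs x

lemma dt2_eq {τ : ℝ} (hτ : τ ∈ Ioo 0 T) (x : EuclideanSpace ℝ (Fin n)) :
    dt2 u τ x = DDs u (τ, x) (1, 0) (1, 0) := (hasD_dt1_time hu hτ x).deriv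

lemma hasF_space2 {τ : ℝ} (hτ : τ ∈ Ioo 0 T) (x : EuclideanSpace ℝ (Fin n))
    (v : ℝ × EuclideanSpace ℝ (Fin n)) :
    HasFDerivAt (fun y => AAs u (τ, y) v)
      ((ContinuousLinearMap.apply ℝ ℝ v).comp
        ((DDs u (τ, x)).comp (ContinuousLinearMap.inr ℝ ℝ (EuclideanSpace ℝ (Fin n))))) x := by
  have h2 := (hasfd2 hu _ ⟨hτ, mem_univ x⟩).comp x (hasFDerivAt_prodMk_right τ x)
  exact (ContinuousLinearMap.apply ℝ ℝ v).hasFDerivAt.comp x h2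

lemma pdpd_eq {τ : ℝ} (hτ : τ ∈ Ioo 0 T) (i : Fin n) (x : EuclideanSpace ℝ (Fin n)) :
    pd i (fun y => pd i (fun z => u τ z) y) x
      = DDs u (τ, x) (0, EuclideanSpace.single i 1) (0, EuclideanSpace.single i 1) := by
  have hfun : (fun y => pd i (fun z => u τ z) y)
      = fun y => AAs u (τ, y) (0, EuclideanSpace.single i 1) := by
    funext y; exact pd_eq hu hτ i y
  rw [pd, hfun, (hasF_space2 hu hτ x (0, EuclideanSpace.single i 1)).fderiv]; rfl

lemma lap_eq {τ : ℝ} (hτ : τ ∈ Ioo 0 T) (x : EuclideanSpace ℝ (Fin n)) :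
    lap (fun y => u τ y) x
      = ∑ i, DDs u (τ, x) (0, EuclideanSpace.single i 1) (0, EuclideanSpace.single i 1) := by
  rw [lap]; exact Finset.sum_congr rfl fun i _ => pdpd_eq hu hτ i x

lemma hasF_dt1_space {τ : ℝ} (hτ : τ ∈ Ioo 0 T) (x : EuclideanSpace ℝ (Fin n)) :
    HasFDerivAt (fun y => dt1 u τ y)
      ((ContinuousLinearMap.apply ℝ ℝ ((1:ℝ), (0 : EuclideanSpace ℝ (Fin n)))).comp
        ((DDs u (τ, x)).comp (ContinuousLinearMap.inr ℝ ℝ (EuclideanSpace ℝ (Fin n))))) x := by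
  have hfun : (fun y => dt1 u τ y) = fun y => AAs u (τ, y) ((1:ℝ), (0:EuclideanSpace ℝ (Fin n))) := by
    funext y; exact dt1_eq hu hτ y
  rw [hfun]; exact hasF_space2 hu hτ x _

end Identities2

section Vanish
variable {n : ℕ} {T : ℝ} {u : ℝ → EuclideanSpace ℝ (Fin n) → ℝ} {K : Set (EuclideanSpace ℝ (Fin n))}
variable (hK : IsClosed K) (hsupp : ∀ t ∈ Icc 0 T, ∀ x ∉ K, u t x = 0)
include hK hsupp

lemma A0 : ∀ τ ∈ Ioo (0:ℝ) T, ∀ x ∉ K, AAs u (τ, x) = 0 := by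
  intro τ hτ x hx
  have hopen : IsOpen (Ioo (0:ℝ) T ×ˢ Kᶜ) := isOpen_Ioo.prod hK.isOpen_compl
  have hmem : ((τ, x) : ℝ × EuclideanSpace ℝ (Fin n)) ∈ Ioo (0:ℝ) T ×ˢ Kᶜ := ⟨hτ, hx⟩
  have heq : FFs u =ᶠ[nhds (τ, x)] fun _ => (0:ℝ) := by
    filter_upwards [hopen.mem_nhds hmem] with q hq
    exact hsupp q.1 (Ioo_subset_Icc_self hq.1) q.2 hq.2
  rw [AAs, heq.fderiv_eq, fderiv_const_apply]

lemma D0 : ∀ τ ∈ Ioo (0:ℝ) T, ∀ x ∉ K, DDs u (τ, x) = 0 := by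
  intro τ hτ x hx
  have hopen : IsOpen (Ioo (0:ℝ) T ×ˢ Kᶜ) := isOpen_Ioo.prod hK.isOpen_compl
  have hmem : ((τ, x) : ℝ × EuclideanSpace ℝ (Fin n)) ∈ Ioo (0:ℝ) T ×ˢ Kᶜ := ⟨hτ, hx⟩
  have heq : AAs u =ᶠ[nhds (τ, x)] fun _ => (0 : ℝ × EuclideanSpace ℝ (Fin n) →L[ℝ] ℝ) := by
    filter_upwards [hopen.mem_nhds hmem] with q hq
    exact A0 hK hsupp q.1 hq.1 q.2 hq.2
  rw [DDs, heq.fderiv_eq, fderiv_const_apply]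

lemma G0 (hT : 0 < T) : ∀ p ∈ (Icc (0:ℝ) T) ×ˢ (univ : Set (EuclideanSpace ℝ (Fin n))),
    p.2 ∉ K → GGs T u p = 0 := by
  rintro ⟨τ, x⟩ hp hx
  have hopen : IsOpen ((univ : Set ℝ) ×ˢ Kᶜ) := isOpen_univ.prod hK.isOpen_compl
  have heq : FFs u =ᶠ[nhdsWithin (τ, x) ((Icc (0:ℝ) T) ×ˢ univ)] fun _ => (0:ℝ) := by
    filter_upwards [mem_nhdsWithin_of_mem_nhds (hopen.mem_nhds ⟨mem_univ τ, hx⟩),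
      self_mem_nhdsWithin] with q hq1 hq2
    exact hsupp q.1 hq2.1 q.2 hq1.2
  rw [GGs, heq.fderivWithin_eq (hsupp τ hp.1 x hx),
    fderivWithin_const_apply _]

end Vanish

section Rho
variable {n : ℕ} {T : ℝ} {u : ℝ → EuclideanSpace ℝ (Fin n) → ℝ}

/-- The energy density, rewritten via `AAs`. -/
noncomputable def rho (u : ℝ → EuclideanSpace ℝ (Fin n) → ℝ) (b c : EuclideanSpace ℝ (Fin n) → ℝ)
    (τ : ℝ) (x : EuclideanSpace ℝ (Fin n)) : ℝ :=
  (∑ i, (AAs u (τ, x) (0, EuclideanSpace.single i 1))^2)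
    + ((c x)^2)⁻¹ * b x * (u τ x)^2 + ((c x)^2)⁻¹ * (AAs u (τ, x) (1, 0))^2

/-- Time derivative of the energy density. -/
noncomputable def rho' (u : ℝ → EuclideanSpace ℝ (Fin n) → ℝ) (b c : EuclideanSpace ℝ (Fin n) → ℝ)
    (τ : ℝ) (x : EuclideanSpace ℝ (Fin n)) : ℝ :=
  (∑ i, 2 * AAs u (τ, x) (0, EuclideanSpace.single i 1)
      * DDs u (τ, x) (1, 0) (0, EuclideanSpace.single i 1))
    + ((c x)^2)⁻¹ * b x * (2 * u τ x * AAs u (τ, x) (1, 0))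
    + ((c x)^2)⁻¹ * (2 * AAs u (τ, x) (1, 0) * DDs u (τ, x) (1, 0) (1, 0))

variable (hu : ContDiffOn ℝ 2 (FFs u) (Icc 0 T ×ˢ univ))
include hu

lemma rho_hasDeriv (b c : EuclideanSpace ℝ (Fin n) → ℝ) {τ : ℝ} (hτ : τ ∈ Ioo 0 T)
    (x : EuclideanSpace ℝ (Fin n)) :
    HasDerivAt (fun s => rho u b c s x) (rho' u b c τ x) τ := by
  have h1 : HasDerivAt (fun s => ∑ i, (AAs u (s, x) (0, EuclideanSpace.single i 1))^2)
      (∑ i, 2 * AAs u (τ, x) (0, EuclideanSpace.single i 1)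
        * DDs u (τ, x) (1, 0) (0, EuclideanSpace.single i 1)) τ := by
    refine HasDerivAt.congr_deriv (HasDerivAt.fun_sum fun i _ => (hasD_time2 hu hτ x _).pow 2) ?_
    refine Finset.sum_congr rfl fun i _ => ?_
    push_cast; ring
  have h2 : HasDerivAt (fun s => ((c x)^2)⁻¹ * b x * (u s x)^2)
      (((c x)^2)⁻¹ * b x * (2 * u τ x * AAs u (τ, x) (1, 0))) τ := by
    refine HasDerivAt.congr_deriv (((hasD_time hu hτ x).pow 2).const_mul (((c x)^2)⁻¹ * b x)) ?_
    push_cast; ring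
  have h3 : HasDerivAt (fun s => ((c x)^2)⁻¹ * (AAs u (s, x) (1, 0))^2)
      (((c x)^2)⁻¹ * (2 * AAs u (τ, x) (1, 0) * DDs u (τ, x) (1, 0) (1, 0))) τ := by
    refine HasDerivAt.congr_deriv (((hasD_time2 hu hτ x _).pow 2).const_mul (((c x)^2)⁻¹)) ?_
    push_cast; ring
  exact (h1.add h2).add h3

lemma contA_x {τ : ℝ} (hτ : τ ∈ Ioo 0 T) :
    Continuous (fun x : EuclideanSpace ℝ (Fin n) => AAs u (τ, x)) :=
  (contA hu).comp_continuous (Continuous.prodMk_right τ) (fun x => ⟨hτ, mem_univ x⟩)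

lemma contD_x {τ : ℝ} (hτ : τ ∈ Ioo 0 T) :
    Continuous (fun x : EuclideanSpace ℝ (Fin n) => DDs u (τ, x)) :=
  (contD hu).comp_continuous (Continuous.prodMk_right τ) (fun x => ⟨hτ, mem_univ x⟩)

lemma contF_x {τ : ℝ} (hτ : τ ∈ Ioo 0 T) :
    Continuous (fun x : EuclideanSpace ℝ (Fin n) => u τ x) :=
  (hu.continuousOn.mono omega_sub).comp_continuous (Continuous.prodMk_right τ)
    (fun x => ⟨hτ, mem_univ x⟩) |>.congr (fun x => rfl)

lemma rho_cont (b c : EuclideanSpace ℝ (Fin n) → ℝ) (hb : Continuous b) (hc : Continuous c)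
    (hcpos : ∀ x, 0 < c x) {τ : ℝ} (hτ : τ ∈ Ioo 0 T) :
    Continuous (fun x => rho u b c τ x) := by
  unfold rho
  have hA := contA_x hu hτ
  have hF := contF_x hu hτ
  have hcinv : Continuous fun x : EuclideanSpace ℝ (Fin n) => ((c x)^2)⁻¹ :=
    (hc.pow 2).inv₀ (fun x => pow_ne_zero 2 (hcpos x).ne')
  fun_prop

lemma rho'_contOn (b c : EuclideanSpace ℝ (Fin n) → ℝ) (hb : Continuous b) (hc : Continuous c)
    (hcpos : ∀ x, 0 < c x) :
    ContinuousOn (fun p : ℝ × EuclideanSpace ℝ (Fin n) => rho' u b c p.1 p.2)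
      (Ioo (0:ℝ) T ×ˢ univ) := by
  unfold rho'
  have hAv : ∀ v : ℝ × EuclideanSpace ℝ (Fin n),
      ContinuousOn (fun p : ℝ × EuclideanSpace ℝ (Fin n) => AAs u p v) (Ioo (0:ℝ) T ×ˢ univ) :=
    fun v => (ContinuousLinearMap.apply ℝ ℝ v).continuous.comp_continuousOn (contA hu)
  have hDvw : ∀ v w : ℝ × EuclideanSpace ℝ (Fin n),
      ContinuousOn (fun p : ℝ × EuclideanSpace ℝ (Fin n) => DDs u p v w) (Ioo (0:ℝ) T ×ˢ univ) :=
    fun v w => (ContinuousLinearMap.apply ℝ ℝ w).continuous.comp_continuousOn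
      ((ContinuousLinearMap.apply ℝ _ v).continuous.comp_continuousOn (contD hu))
  have hF : ContinuousOn (fun p : ℝ × EuclideanSpace ℝ (Fin n) => u p.1 p.2)
      (Ioo (0:ℝ) T ×ˢ univ) := hu.continuousOn.mono omega_sub
  have hcb : ContinuousOn (fun p : ℝ × EuclideanSpace ℝ (Fin n) => ((c p.2)^2)⁻¹)
      (Ioo (0:ℝ) T ×ˢ univ) := (((hc.comp continuous_snd).pow 2).inv₀
        (fun p => pow_ne_zero 2 (hcpos p.2).ne')).continuousOn
  refine (ContinuousOn.add (ContinuousOn.add ?_ ?_) ?_)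
  · exact continuousOn_finset_sum _ fun i _ => (continuousOn_const.mul (hAv _)).mul (hDvw _ _)
  · exact (hcb.mul ((hb.comp continuous_snd).continuousOn)).mul
      ((continuousOn_const.mul hF).mul (hAv _))
  · exact hcb.mul ((continuousOn_const.mul (hAv _)).mul (hDvw _ _))


end Rho

set_option maxHeartbeats 4000000 in
/-- Energy dissipation identity: for a compactly supported (in space) solution of
`∂ₜ²u − c²Δu + a∂ₜu + bu + Φ ⋆ ∂ₜu = 0`, the energy
`E(t) = ∫ (|∇ₓu|² + c⁻²b|u|² + c⁻²|∂ₜu|²) dx` is differentiable on `(0,T)` with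
`E′(t) = −2∫ a c⁻² |∂ₜu|² dx − 2∫ c⁻² (Φ ⋆ ∂ₜu) ∂ₜu dx`. -/
theorem stmt2 {n : ℕ} (T : ℝ) (hT : 0 < T)
    (a b c : EuclideanSpace ℝ (Fin n) → ℝ)
    (ha : Continuous a) (hb : Continuous b) (hc : Continuous c) (hcpos : ∀ x, 0 < c x)
    (Φ : ℝ → EuclideanSpace ℝ (Fin n) → ℝ)
    (hΦ : ContinuousOn (fun p : ℝ × EuclideanSpace ℝ (Fin n) => Φ p.1 p.2)
      (Icc 0 T ×ˢ univ))
    (u : ℝ → EuclideanSpace ℝ (Fin n) → ℝ)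
    (hu : ContDiffOn ℝ 2 (fun p : ℝ × EuclideanSpace ℝ (Fin n) => u p.1 p.2)
      (Icc 0 T ×ˢ univ))
    (K : Set (EuclideanSpace ℝ (Fin n))) (hK : IsCompact K)
    (hsupp : ∀ t ∈ Icc 0 T, ∀ x ∉ K, u t x = 0)
    (hPDE : ∀ t ∈ Ioo 0 T, ∀ x,
      dt2 u t x - (c x)^2 * lap (fun y => u t y) x + a x * dt1 u t x + b x * u t x
        + tconv Φ (dt1 u) t x = 0) :
    ∀ t ∈ Ioo 0 T,
      HasDerivAt (fun τ => ∫ x, (‖gradient (fun y => u τ y) x‖^2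
            + ((c x)^2)⁻¹ * b x * (u τ x)^2 + ((c x)^2)⁻¹ * (dt1 u τ x)^2))
        ((-2) * (∫ x, a x * ((c x)^2)⁻¹ * (dt1 u t x)^2)
          - 2 * (∫ x, ((c x)^2)⁻¹ * tconv Φ (dt1 u) t x * dt1 u t x)) t := by
  intro t ht
  obtain ⟨ht0, htT⟩ := ht
  have hu' : ContDiffOn ℝ 2 (FFs u) (Icc 0 T ×ˢ univ) := hu
  have hKc : IsClosed K := hK.isClosed
  set δ : ℝ := min t (T - t) / 2 with hδdef
  have hmin1 : min t (T - t) ≤ t := min_le_left _ _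
  have hmin2 : min t (T - t) ≤ T - t := min_le_right _ _
  have hδpos : 0 < δ := by
    have : 0 < min t (T - t) := lt_min ht0 (by linarith)
    positivity
  have hIccsub : Icc (t - δ) (t + δ) ⊆ Ioo 0 T := by
    intro s hs
    obtain ⟨h1, h2⟩ := hs
    constructor <;> [linarith; linarith]
  have hballIcc : Metric.ball t δ ⊆ Icc (t - δ) (t + δ) :=
    Metric.ball_subset_closedBall.trans (by rw [Real.closedBall_eq_Icc])
  have hball : Metric.ball t δ ⊆ Ioo 0 T := hballIcc.trans hIccsub
  have htmem : t ∈ Ioo (0:ℝ) T := ⟨ht0, htT⟩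
  -- vanishing off K
  have hrho0 : ∀ τ ∈ Ioo (0:ℝ) T, ∀ x ∉ K, rho u b c τ x = 0 ∧ rho' u b c τ x = 0 := by
    intro τ hτ x hx
    have hA := A0 hKc hsupp τ hτ x hx
    have hD := D0 hKc hsupp τ hτ x hx
    have hu0 : u τ x = 0 := hsupp τ (Ioo_subset_Icc_self hτ) x hx
    constructor <;> simp [rho, rho', hA, hD, hu0]
  -- uniform bound on rho'
  have hKI : IsCompact (Icc (t - δ) (t + δ) ×ˢ K) := isCompact_Icc.prod hK
  obtain ⟨C, hC⟩ := hKI.exists_bound_of_continuousOn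
    ((rho'_contOn hu' b c hb hc hcpos).mono (prod_mono hIccsub (subset_univ K)))
  have hboundInt : Integrable (K.indicator (fun _ => C)) (volume) := by
    rw [integrable_indicator_iff hK.measurableSet]
    exact integrableOn_const hK.measure_lt_top.ne
  have hrho't_cont : Continuous (fun x => rho' u b c t x) :=
    ((rho'_contOn hu' b c hb hc hcpos)).comp_continuous (Continuous.prodMk_right t)
      (fun x => ⟨htmem, mem_univ x⟩)
  have key := hasDerivAt_integral_of_dominated_loc_of_deriv_le (μ := volume)
      (F := fun τ x => rho u b c τ x) (F' := fun τ x => rho' u b c τ x) (x₀ := t)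
      (bound := K.indicator (fun _ => C)) (Metric.ball_mem_nhds t hδpos)
      (by filter_upwards [Ioo_mem_nhds ht0 htT] with τ hτ using
        (rho_cont hu' b c hb hc hcpos hτ).aestronglyMeasurable)
      (((rho_cont hu' b c hb hc hcpos htmem)).integrable_of_hasCompactSupport
        (HasCompactSupport.intro hK fun x hx => (hrho0 t htmem x hx).1))
      hrho't_cont.aestronglyMeasurable
      (Filter.Eventually.of_forall fun x => fun τ hτ => by
        by_cases hx : x ∈ K
        · rw [Set.indicator_of_mem hx]
          exact hC (τ, x) ⟨hballIcc hτ, hx⟩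
        · have h0 : rho' u b c τ x = 0 := (hrho0 τ (hball hτ) x hx).2
          simp [Set.indicator_of_notMem hx, h0])
      hboundInt
      (Filter.Eventually.of_forall fun x => fun τ hτ =>
        rho_hasDeriv hu' b c (hball hτ) x)
  have hkey : HasDerivAt (fun τ => ∫ x, rho u b c τ x) (∫ x, rho' u b c t x) t := key.2
  have hEq : (fun τ => ∫ x, (‖gradient (fun y => u τ y) x‖^2
        + ((c x)^2)⁻¹ * b x * (u τ x)^2 + ((c x)^2)⁻¹ * (dt1 u τ x)^2))
      =ᶠ[nhds t] (fun τ => ∫ x, rho u b c τ x) := by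
    filter_upwards [Ioo_mem_nhds ht0 htT] with τ hτ
    refine integral_congr_ae (Filter.Eventually.of_forall fun x => ?_)
    show ‖gradient (fun y => u τ y) x‖^2 + ((c x)^2)⁻¹ * b x * (u τ x)^2
        + ((c x)^2)⁻¹ * (dt1 u τ x)^2 = rho u b c τ x
    rw [rho, grad_sq_eq hu' hτ x, dt1_eq hu' hτ x]
  have hval : ∫ x, rho' u b c t x
      = (-2) * (∫ x, a x * ((c x)^2)⁻¹ * (dt1 u t x)^2)
        - 2 * (∫ x, ((c x)^2)⁻¹ * tconv Φ (dt1 u) t x * dt1 u t x) := by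
    -- continuity helpers at fixed time `t`
    have hAt : Continuous (fun x => AAs u (t, x)) := contA_x hu' htmem
    have hDt : Continuous (fun x => DDs u (t, x)) := contD_x hu' htmem
    have hAv : ∀ v₀ : ℝ × EuclideanSpace ℝ (Fin n), Continuous (fun x => AAs u (t, x) v₀) :=
      fun v₀ => (ContinuousLinearMap.apply ℝ ℝ v₀).continuous.comp hAt
    have hDvw : ∀ v₀ w₀ : ℝ × EuclideanSpace ℝ (Fin n),
        Continuous (fun x => DDs u (t, x) v₀ w₀) := fun v₀ w₀ =>
      (ContinuousLinearMap.apply ℝ ℝ w₀).continuous.comp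
        ((ContinuousLinearMap.apply ℝ ((ℝ × EuclideanSpace ℝ (Fin n)) →L[ℝ] ℝ) v₀).continuous.comp
          hDt)
    have hcinv : Continuous fun x : EuclideanSpace ℝ (Fin n) => ((c x)^2)⁻¹ :=
      (hc.pow 2).inv₀ fun x => pow_ne_zero 2 (hcpos x).ne'
    have hA0t := A0 hKc hsupp t htmem
    have hD0t := D0 hKc hsupp t htmem
    -- the convolution term as a continuous function
    set pr : ℝ → ℝ := fun s => max 0 (min s t) with hprdef
    have hprc : Continuous pr := continuous_const.max (continuous_id.min continuous_const)
    have hprIcc : ∀ s, pr s ∈ Icc (0:ℝ) t :=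
      fun s => ⟨le_max_left _ _, max_le ht0.le (min_le_right _ _)⟩
    have hprT : ∀ s, pr s ∈ Icc (0:ℝ) T :=
      fun s => ⟨(hprIcc s).1, le_trans (hprIcc s).2 htT.le⟩
    set Q : EuclideanSpace ℝ (Fin n) → ℝ :=
      fun x => ∫ s in (0:ℝ)..t, Φ (t - pr s) x * (GGs T u (pr s, x) (1, 0)) with hQdef
    have hQeq : ∀ x, tconv Φ (dt1 u) t x = Q x := by
      intro x
      refine intervalIntegral.integral_congr_ae (Filter.Eventually.of_forall fun s hs => ?_)
      rw [Set.uIoc_of_le ht0.le] at hs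
      have hst : s ∈ Ioo (0:ℝ) T := ⟨hs.1, lt_of_le_of_lt hs.2 htT⟩
      have hpr_eq : pr s = s := by
        rw [hprdef]; simp only [min_eq_left hs.2, max_eq_right hs.1.le]
      rw [hpr_eq, dt1_eq hu' hst x, GAeq (T := T) (u := u) _ ⟨hst, mem_univ x⟩]
    have hQcont : Continuous Q := by
      refine intervalIntegral.continuous_parametric_intervalIntegral_of_continuous'
        (μ := volume) ?_ 0 t
      have h1 : Continuous (fun q : EuclideanSpace ℝ (Fin n) × ℝ => Φ (t - pr q.2) q.1) := by
        refine hΦ.comp_continuous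
          (((continuous_const.sub (hprc.comp continuous_snd)).prodMk continuous_fst)) ?_
        intro q
        have h1 := (hprIcc q.2).1
        have h2 := (hprIcc q.2).2
        refine ⟨⟨?_, ?_⟩, mem_univ _⟩ <;> simp only [Pi.sub_apply, Function.comp_apply]
        · linarith
        · linarith
      have h2 : Continuous (fun q : EuclideanSpace ℝ (Fin n) × ℝ =>
          GGs T u (pr q.2, q.1) ((1:ℝ), 0)) := by
        refine (ContinuousLinearMap.apply ℝ ℝ ((1:ℝ), (0 : EuclideanSpace ℝ (Fin n)))).continuous.comp ?_
        exact (contG hu' hT).comp_continuous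
          (((hprc.comp continuous_snd).prodMk continuous_fst)) (fun q => ⟨hprT q.2, mem_univ _⟩)
      exact h1.mul h2
    have hQ0 : ∀ x ∉ K, Q x = 0 := by
      intro x hx
      rw [hQdef]
      beta_reduce
      have : ∀ s ∈ Set.uIcc (0:ℝ) t, Φ (t - pr s) x * (GGs T u (pr s, x) (1, 0))
          = (0:ℝ) := by
        intro s _
        rw [G0 hKc hsupp hT (pr s, x) ⟨hprT s, mem_univ x⟩ hx]
        simp
      rw [intervalIntegral.integral_congr this]
      simp
    -- the pointwise identity coming from the PDE
    have claim : ∀ x, rho' u b c t x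
        = (∑ i, (2 * AAs u (t, x) (0, EuclideanSpace.single i 1)
              * DDs u (t, x) (1, 0) (0, EuclideanSpace.single i 1)
            + 2 * (AAs u (t, x) (1, 0)
              * DDs u (t, x) (0, EuclideanSpace.single i 1) (0, EuclideanSpace.single i 1))))
          + ((-2) * (a x * ((c x)^2)⁻¹ * (AAs u (t, x) (1, 0))^2)
            + (-2) * (((c x)^2)⁻¹ * Q x * AAs u (t, x) (1, 0))) := by
      intro x
      have hc2 : (c x)^2 ≠ 0 := pow_ne_zero 2 (hcpos x).ne'
      have hPDEx : DDs u (t, x) (1, 0) (1, 0)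
          = (c x)^2 * (∑ i, DDs u (t, x) (0, EuclideanSpace.single i 1)
              (0, EuclideanSpace.single i 1))
            - a x * AAs u (t, x) (1, 0) - b x * u t x - Q x := by
        have h0 := hPDE t htmem x
        rw [dt2_eq hu' htmem x, lap_eq hu' htmem x, dt1_eq hu' htmem x, hQeq x] at h0
        linarith
      have hsplit : (∑ i, (2 * AAs u (t, x) (0, EuclideanSpace.single i 1)
              * DDs u (t, x) (1, 0) (0, EuclideanSpace.single i 1)
            + 2 * (AAs u (t, x) (1, 0)
              * DDs u (t, x) (0, EuclideanSpace.single i 1) (0, EuclideanSpace.single i 1))))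
          = (∑ i, 2 * AAs u (t, x) (0, EuclideanSpace.single i 1)
              * DDs u (t, x) (1, 0) (0, EuclideanSpace.single i 1))
            + 2 * (AAs u (t, x) (1, 0) * (∑ i, DDs u (t, x) (0, EuclideanSpace.single i 1)
              (0, EuclideanSpace.single i 1))) := by
        rw [Finset.sum_add_distrib, ← Finset.mul_sum, ← Finset.mul_sum]
      rw [hsplit]
      show (∑ i, 2 * AAs u (t, x) (0, EuclideanSpace.single i 1)
              * DDs u (t, x) (1, 0) (0, EuclideanSpace.single i 1))
          + ((c x)^2)⁻¹ * b x * (2 * u t x * AAs u (t, x) (1, 0))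
          + ((c x)^2)⁻¹ * (2 * AAs u (t, x) (1, 0) * DDs u (t, x) (1, 0) (1, 0)) = _
      rw [hPDEx]
      have hci : ((c x)^2)⁻¹ * (c x)^2 = 1 := inv_mul_cancel₀ hc2
      linear_combination (2 * AAs u (t, x) (1, 0) * ∑ i, DDs u (t, x) (0, EuclideanSpace.single i 1)
        (0, EuclideanSpace.single i 1)) * hci
    -- integrability of all the pieces
    have hIntOf : ∀ f : EuclideanSpace ℝ (Fin n) → ℝ, Continuous f → (∀ x ∉ K, f x = 0) →
        Integrable f volume := fun f hf h0 =>
      hf.integrable_of_hasCompactSupport (HasCompactSupport.intro hK h0)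
    have hInt1 : ∀ i : Fin n, Integrable (fun x => 2 * AAs u (t, x) (0, EuclideanSpace.single i 1)
        * DDs u (t, x) (1, 0) (0, EuclideanSpace.single i 1)
        + 2 * (AAs u (t, x) (1, 0)
          * DDs u (t, x) (0, EuclideanSpace.single i 1) (0, EuclideanSpace.single i 1))) volume := by
      intro i
      refine hIntOf _ (((continuous_const.mul (hAv _)).mul (hDvw _ _)).add (continuous_const.mul ((hAv _).mul (hDvw _ _)))) fun x hx => by simp [hA0t x hx, hD0t x hx]
    have hInt2 : Integrable (fun x => a x * ((c x)^2)⁻¹ * (AAs u (t, x) (1, 0))^2) volume := by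
      refine hIntOf _ ((ha.mul hcinv).mul ((hAv _).pow 2)) fun x hx => by simp [hA0t x hx]
    have hInt3 : Integrable (fun x => ((c x)^2)⁻¹ * Q x * AAs u (t, x) (1, 0)) volume := by
      refine hIntOf _ ((hcinv.mul hQcont).mul (hAv _)) fun x hx => by simp [hA0t x hx]
    -- integration by parts: each summand integrates to zero
    have hzero : ∀ i : Fin n, (∫ x, (2 * AAs u (t, x) (0, EuclideanSpace.single i 1)
        * DDs u (t, x) (1, 0) (0, EuclideanSpace.single i 1)
        + 2 * (AAs u (t, x) (1, 0)
          * DDs u (t, x) (0, EuclideanSpace.single i 1) (0, EuclideanSpace.single i 1)))) = 0 := by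
      intro i
      have hgd : ∀ x, HasFDerivAt (fun y => AAs u (t, y) (0, EuclideanSpace.single i 1))
          ((ContinuousLinearMap.apply ℝ ℝ ((0:ℝ), EuclideanSpace.single i (1:ℝ))).comp
            ((DDs u (t, x)).comp (ContinuousLinearMap.inr ℝ ℝ (EuclideanSpace ℝ (Fin n))))) x :=
        fun x => hasF_space2 hu' htmem x _
      have hvd : ∀ x, HasFDerivAt (fun y => AAs u (t, y) ((1:ℝ), (0:EuclideanSpace ℝ (Fin n))))
          ((ContinuousLinearMap.apply ℝ ℝ ((1:ℝ), (0:EuclideanSpace ℝ (Fin n)))).comp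
            ((DDs u (t, x)).comp (ContinuousLinearMap.inr ℝ ℝ (EuclideanSpace ℝ (Fin n))))) x :=
        fun x => hasF_space2 hu' htmem x _
      have hgf : ∀ x, fderiv ℝ (fun y => AAs u (t, y) (0, EuclideanSpace.single i 1)) x
          (EuclideanSpace.single i 1)
          = DDs u (t, x) (0, EuclideanSpace.single i 1) (0, EuclideanSpace.single i 1) :=
        fun x => by rw [(hgd x).fderiv]; rfl
      have hvf : ∀ x, fderiv ℝ (fun y => AAs u (t, y) ((1:ℝ), (0:EuclideanSpace ℝ (Fin n)))) x
          (EuclideanSpace.single i 1)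
          = DDs u (t, x) (0, EuclideanSpace.single i 1) (1, 0) :=
        fun x => by rw [(hvd x).fderiv]; rfl
      have hIntA : Integrable (fun x => AAs u (t, x) (1, 0)
          * fderiv ℝ (fun y => AAs u (t, y) (0, EuclideanSpace.single i 1)) x
            (EuclideanSpace.single i 1)) volume := by
        have : (fun x => AAs u (t, x) (1, 0)
            * fderiv ℝ (fun y => AAs u (t, y) (0, EuclideanSpace.single i 1)) x
              (EuclideanSpace.single i 1))
            = fun x => AAs u (t, x) (1, 0) * DDs u (t, x) (0, EuclideanSpace.single i 1)
              (0, EuclideanSpace.single i 1) := funext fun x => by rw [hgf x]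
        rw [this]
        exact hIntOf _ ((hAv _).mul (hDvw _ _)) fun x hx => by simp [hA0t x hx]
      have hIntB : Integrable (fun x =>
          fderiv ℝ (fun y => AAs u (t, y) ((1:ℝ), (0:EuclideanSpace ℝ (Fin n)))) x
            (EuclideanSpace.single i 1) * AAs u (t, x) (0, EuclideanSpace.single i 1)) volume := by
        have : (fun x => fderiv ℝ (fun y => AAs u (t, y) ((1:ℝ), (0:EuclideanSpace ℝ (Fin n)))) x
            (EuclideanSpace.single i 1) * AAs u (t, x) (0, EuclideanSpace.single i 1))
            = fun x => DDs u (t, x) (0, EuclideanSpace.single i 1) (1, 0)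
              * AAs u (t, x) (0, EuclideanSpace.single i 1) := funext fun x => by rw [hvf x]
        rw [this]
        exact hIntOf _ ((hDvw _ _).mul (hAv _)) fun x hx => by simp [hA0t x hx, hD0t x hx]
      have hIntC : Integrable (fun x => AAs u (t, x) (1, 0)
          * AAs u (t, x) (0, EuclideanSpace.single i 1)) volume :=
        hIntOf _ ((hAv _).mul (hAv _)) fun x hx => by simp [hA0t x hx]
      have hibp := integral_mul_fderiv_eq_neg_fderiv_mul_of_integrable
        (μ := (volume : Measure (EuclideanSpace ℝ (Fin n))))
        (f := fun x => AAs u (t, x) ((1:ℝ), (0:EuclideanSpace ℝ (Fin n))))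
        (g := fun y => AAs u (t, y) (0, EuclideanSpace.single i 1))
        (v := EuclideanSpace.single i 1)
        hIntB hIntA hIntC
        (fun x _ => (hvd x).differentiableAt) (fun x _ => (hgd x).differentiableAt)
      -- hibp : ∫ v * ∂ᵢgᵢ = - ∫ ∂ᵢv * gᵢ
      have hsym : ∀ x, DDs u (t, x) (0, EuclideanSpace.single i 1) ((1:ℝ), 0)
          = DDs u (t, x) (1, 0) (0, EuclideanSpace.single i 1) :=
        fun x => symmD hu' (t, x) ⟨htmem, mem_univ x⟩ _ _
      have e1 : (∫ x, AAs u (t, x) (1, 0) * DDs u (t, x) (0, EuclideanSpace.single i 1)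
          (0, EuclideanSpace.single i 1))
          = - ∫ x, DDs u (t, x) (1, 0) (0, EuclideanSpace.single i 1)
            * AAs u (t, x) (0, EuclideanSpace.single i 1) := by
        have l1 : (fun x => AAs u (t, x) (1, 0) * DDs u (t, x) (0, EuclideanSpace.single i 1)
            (0, EuclideanSpace.single i 1))
            = fun x => AAs u (t, x) (1, 0)
              * fderiv ℝ (fun y => AAs u (t, y) (0, EuclideanSpace.single i 1)) x
                (EuclideanSpace.single i 1) := funext fun x => by rw [hgf x]
        have l2 : (fun x => DDs u (t, x) (1, 0) (0, EuclideanSpace.single i 1)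
            * AAs u (t, x) (0, EuclideanSpace.single i 1))
            = fun x => fderiv ℝ (fun y => AAs u (t, y) ((1:ℝ), (0:EuclideanSpace ℝ (Fin n)))) x
              (EuclideanSpace.single i 1) * AAs u (t, x) (0, EuclideanSpace.single i 1) :=
          funext fun x => by rw [hvf x, hsym x]
        rw [l1, l2]; exact hibp
      have hIgh : Integrable (fun x => 2 * AAs u (t, x) (0, EuclideanSpace.single i 1)
          * DDs u (t, x) (1, 0) (0, EuclideanSpace.single i 1)) volume :=
        hIntOf _ ((continuous_const.mul (hAv _)).mul (hDvw _ _)) fun x hx => by simp [hA0t x hx]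
      have hIvl : Integrable (fun x => AAs u (t, x) (1, 0)
          * DDs u (t, x) (0, EuclideanSpace.single i 1) (0, EuclideanSpace.single i 1)) volume :=
        hIntOf _ ((hAv _).mul (hDvw _ _)) fun x hx => by simp [hA0t x hx]
      rw [integral_add hIgh (hIvl.const_mul 2), integral_const_mul, e1]
      have : (fun x => 2 * AAs u (t, x) (0, EuclideanSpace.single i 1)
          * DDs u (t, x) (1, 0) (0, EuclideanSpace.single i 1))
          = fun x => 2 * (DDs u (t, x) (1, 0) (0, EuclideanSpace.single i 1)
            * AAs u (t, x) (0, EuclideanSpace.single i 1)) := funext fun x => by ring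
      rw [this, integral_const_mul]
      ring
    -- put everything together
    have hIntSum : Integrable (fun x => ∑ i, (2 * AAs u (t, x) (0, EuclideanSpace.single i 1)
        * DDs u (t, x) (1, 0) (0, EuclideanSpace.single i 1)
        + 2 * (AAs u (t, x) (1, 0)
          * DDs u (t, x) (0, EuclideanSpace.single i 1) (0, EuclideanSpace.single i 1)))) volume :=
      integrable_finset_sum _ fun i _ => hInt1 i
    have hIntTail : Integrable (fun x =>
        (-2) * (a x * ((c x)^2)⁻¹ * (AAs u (t, x) (1, 0))^2)
        + (-2) * (((c x)^2)⁻¹ * Q x * AAs u (t, x) (1, 0))) volume :=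
      (hInt2.const_mul _).add (hInt3.const_mul _)
    calc (∫ x, rho' u b c t x)
        = ∫ x, ((∑ i, (2 * AAs u (t, x) (0, EuclideanSpace.single i 1)
              * DDs u (t, x) (1, 0) (0, EuclideanSpace.single i 1)
            + 2 * (AAs u (t, x) (1, 0)
              * DDs u (t, x) (0, EuclideanSpace.single i 1) (0, EuclideanSpace.single i 1))))
          + ((-2) * (a x * ((c x)^2)⁻¹ * (AAs u (t, x) (1, 0))^2)
            + (-2) * (((c x)^2)⁻¹ * Q x * AAs u (t, x) (1, 0)))) := by
          exact integral_congr_ae (Filter.Eventually.of_forall fun x => claim x)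
      _ = (∫ x, (∑ i, (2 * AAs u (t, x) (0, EuclideanSpace.single i 1)
              * DDs u (t, x) (1, 0) (0, EuclideanSpace.single i 1)
            + 2 * (AAs u (t, x) (1, 0)
              * DDs u (t, x) (0, EuclideanSpace.single i 1) (0, EuclideanSpace.single i 1)))))
          + ∫ x, ((-2) * (a x * ((c x)^2)⁻¹ * (AAs u (t, x) (1, 0))^2)
            + (-2) * (((c x)^2)⁻¹ * Q x * AAs u (t, x) (1, 0))) :=
          integral_add hIntSum hIntTail
      _ = (∑ i, ∫ x, (2 * AAs u (t, x) (0, EuclideanSpace.single i 1)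
              * DDs u (t, x) (1, 0) (0, EuclideanSpace.single i 1)
            + 2 * (AAs u (t, x) (1, 0)
              * DDs u (t, x) (0, EuclideanSpace.single i 1) (0, EuclideanSpace.single i 1))))
          + ((-2) * (∫ x, a x * ((c x)^2)⁻¹ * (AAs u (t, x) (1, 0))^2)
            + (-2) * (∫ x, ((c x)^2)⁻¹ * Q x * AAs u (t, x) (1, 0))) := by
          rw [integral_finset_sum _ fun i _ => hInt1 i,
            integral_add (hInt2.const_mul _) (hInt3.const_mul _),
            integral_const_mul, integral_const_mul]
      _ = (-2) * (∫ x, a x * ((c x)^2)⁻¹ * (dt1 u t x)^2)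
          - 2 * (∫ x, ((c x)^2)⁻¹ * tconv Φ (dt1 u) t x * dt1 u t x) := by
          rw [Finset.sum_congr rfl fun i _ => hzero i]
          have e2 : (fun x => a x * ((c x)^2)⁻¹ * (dt1 u t x)^2)
              = fun x => a x * ((c x)^2)⁻¹ * (AAs u (t, x) (1, 0))^2 :=
            funext fun x => by rw [dt1_eq hu' htmem x]
          have e3 : (fun x => ((c x)^2)⁻¹ * tconv Φ (dt1 u) t x * dt1 u t x)
              = fun x => ((c x)^2)⁻¹ * Q x * AAs u (t, x) (1, 0) :=
            funext fun x => by rw [dt1_eq hu' htmem x, hQeq x]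
          rw [e2, e3]
          simp
          ring
  exact hval ▸ (hkey.congr_of_eventuallyEq hEq)
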